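/- Fix α₅, η ∈ ℂ. Define Φ₅ : {(q₁,q₂,p₁,p₂) ∈ ℂ⁴ : p₁ ≠ 0} → ℂ⁴ by Φ₅(q₁,q₂,p₁,p₂) = (−(q₁p₁+q₂p₂−α₅+η)p₁, q₂p₁, 1/p₁, p₂/p₁). Let Ω be the 4×4 complex matrix with entries Ω₁₃ = Ω₂₄ = 1, Ω₃₁ = Ω₄₂ = −1 and all other entries 0. Then Φ₅ is a symplectic transformation: at every point of its domain Φ₅ is complex-differentiable and the 4×4 matrix J of its derivative satisfies Jᵀ·Ω·J = Ω. -/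

import Mathlib

set_option maxHeartbeats 1000000

/-- The coordinate system `Φ₅ = (x₃^{[01]}, y₃^{[01]}, z₃^{[01]}, w₃^{[01]})` resolving
the accessible singularity `C₃^{(01)}` of the fourth-order FST Painlevé system,
`Φ₅(q₁,q₂,p₁,p₂) = (−(q₁p₁+q₂p₂−α₅+η)p₁, q₂p₁, 1/p₁, p₂/p₁)`, is a symplectic
transformation: at every point of its domain `{p₁ ≠ 0}` it is complex-differentiable
and its Jacobian matrix `J` satisfies `Jᵀ Ω J = Ω`, where `Ω` is the matrix of the
canonical symplectic form (coordinates ordered `(q₁,q₂,p₁,p₂)`). -/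
theorem Phi5_symplectic (α₅ η : ℂ) (v : Fin 4 → ℂ) (hv : v 2 ≠ 0) :
    ∃ J : Matrix (Fin 4) (Fin 4) ℂ,
      HasFDerivAt
        (fun w : Fin 4 → ℂ =>
          (![-(w 0 * w 2 + w 1 * w 3 - α₅ + η) * w 2, w 1 * w 2, 1 / w 2, w 3 / w 2] :
            Fin 4 → ℂ))
        (LinearMap.toContinuousLinearMap (Matrix.mulVecLin J)) v ∧
      J.transpose * (!![0, 0, 1, 0; 0, 0, 0, 1; -1, 0, 0, 0; 0, -1, 0, 0] :
          Matrix (Fin 4) (Fin 4) ℂ) * J =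
        !![0, 0, 1, 0; 0, 0, 0, 1; -1, 0, 0, 0; 0, -1, 0, 0] := by
  set a := v 0
  set b := v 1
  set c := v 2
  set d := v 3
  refine ⟨!![-c * c, -(c * d), -(2 * a * c + b * d - α₅ + η), -(b * c);
      0, c, b, 0;
      0, 0, -(c * c)⁻¹, 0;
      0, 0, -(d * (c * c)⁻¹), c⁻¹], ?_, ?_⟩
  · have hproj : ∀ i : Fin 4, HasFDerivAt (fun w : Fin 4 → ℂ => w i)
        (ContinuousLinearMap.proj (R := ℂ) (φ := fun _ : Fin 4 => ℂ) i) v :=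
      fun i => (ContinuousLinearMap.proj (R := ℂ) (φ := fun _ : Fin 4 => ℂ) i).hasFDerivAt
    have hp0 := hproj 0
    have hp1 := hproj 1
    have hp2 := hproj 2
    have hp3 := hproj 3
    apply hasFDerivAt_pi''
    intro i
    fin_cases i
    · refine HasFDerivAt.congr_fderiv
        ((((((hp0.mul hp2).add (hp1.mul hp3)).sub_const α₅).add_const η).neg).mul hp2) ?_
      ext u
      simp [Matrix.mulVecLin_apply, Matrix.mulVec, dotProduct, Fin.sum_univ_four, Matrix.vecHead, Matrix.vecTail]
      ring
    · refine HasFDerivAt.congr_fderiv (hp1.mul hp2) ?_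
      ext u
      simp [Matrix.mulVecLin_apply, Matrix.mulVec, dotProduct, Fin.sum_univ_four, Matrix.vecHead, Matrix.vecTail]
      ring
    · simp only [one_div]
      show HasFDerivAt (fun w : Fin 4 → ℂ => (w 2)⁻¹) _ v
      refine HasFDerivAt.congr_fderiv ((hasFDerivAt_inv hv).comp v hp2) ?_
      ext u
      simp [Matrix.mulVecLin_apply, Matrix.mulVec, dotProduct, Fin.sum_univ_four, Matrix.vecHead, Matrix.vecTail]
      field_simp
      try ring
      try tauto
    · simp only [div_eq_mul_inv]
      refine HasFDerivAt.congr_fderiv (hp3.mul ((hasFDerivAt_inv hv).comp v hp2)) ?_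
      ext u
      simp [Matrix.mulVecLin_apply, Matrix.mulVec, dotProduct, Fin.sum_univ_four, Matrix.vecHead, Matrix.vecTail]
      simp only [c, d] at *
      field_simp
      try ring
      try tauto
  · have ht : (!![-c * c, -(c * d), -(2 * a * c + b * d - α₅ + η), -(b * c);
        0, c, b, 0;
        0, 0, -(c * c)⁻¹, 0;
        0, 0, -(d * (c * c)⁻¹), c⁻¹] : Matrix (Fin 4) (Fin 4) ℂ).transpose =
        !![-c * c, 0, 0, 0;
          -(c * d), c, 0, 0;
          -(2 * a * c + b * d - α₅ + η), b, -(c * c)⁻¹, -(d * (c * c)⁻¹);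
          -(b * c), 0, 0, c⁻¹] := by
      ext i j
      fin_cases i <;> fin_cases j <;> simp [Matrix.vecHead, Matrix.vecTail]
    rw [ht]
    ext i j
    fin_cases i <;> fin_cases j <;>
      (try simp [Matrix.mul_apply, Fin.sum_univ_four, Matrix.vecHead, Matrix.vecTail]) <;>
      (try field_simp) <;> (try ring)
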